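/- If p : [0,∞) → ℝ is a differentiable nonnegative function satisfying p·p' = -p² for all t ≥ 0, then p(t) = p(0)·e^{-t} for all t ≥ 0. -/

import Mathlib

open Real Set

theorem dsm_decay (p p' : ℝ → ℝ)
    (hnn : ∀ t ∈ Ici (0:ℝ), 0 ≤ p t)
    (hderiv : ∀ t ∈ Ici (0:ℝ), HasDerivWithinAt p (p' t) (Ici 0) t)
    (heq : ∀ t ∈ Ici (0:ℝ), p t * p' t = -(p t)^2) :
    ∀ t ∈ Ici (0:ℝ), p t = p 0 * Real.exp (-t) := by
  intro t ht
  have ht0 : (0:ℝ) ≤ t := ht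
  have key : ∀ x ∈ Icc (0:ℝ) t,
      (fun s => p s ^ 2 * Real.exp (2*s)) x = (fun s => p s ^ 2 * Real.exp (2*s)) 0 := by
    apply constant_of_has_deriv_right_zero
    · apply ContinuousOn.mul
      · exact (ContinuousOn.pow (fun x hx =>
          ((hderiv x (Icc_subset_Ici_self hx)).continuousWithinAt.mono Icc_subset_Ici_self)) 2)
      · exact (Real.continuous_exp.comp (continuous_const.mul continuous_id)).continuousOn
    · intro x hx
      have hx0 : x ∈ Ici (0:ℝ) := hx.1
      have h1 := hderiv x hx0
      have hp2 : HasDerivWithinAt (fun s => p s ^ 2) (2 * (p x * p' x)) (Ici 0) x := by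
        have : HasDerivWithinAt (fun s => p s * p s) (p' x * p x + p x * p' x) (Ici 0) x := h1.mul h1
        convert this using 1
        · funext s; ring
        · ring
      have he : HasDerivWithinAt (fun s => Real.exp (2*s)) (Real.exp (2*x) * 2) (Ici 0) x := by
        have h2 : HasDerivWithinAt (fun s : ℝ => 2*s) 2 (Ici 0) x := by
          simpa using ((hasDerivAt_id x).const_mul 2).hasDerivWithinAt
        exact (Real.hasDerivAt_exp (2*x)).comp_hasDerivWithinAt x h2
      have hmul := hp2.mul he
      have hz : 2 * (p x * p' x) * Real.exp (2*x) + p x ^ 2 * (Real.exp (2*x) * 2) = 0 := by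
        rw [heq x hx0]; ring
      rw [hz] at hmul
      exact hmul.mono (Ici_subset_Ici.mpr hx.1)
  have hft := key t ⟨ht0, le_rfl⟩
  simp only [mul_zero, Real.exp_zero, mul_one] at hft
  have hsq : p t ^ 2 = (p 0 * Real.exp (-t))^2 := by
    have hept : Real.exp (2*t) > 0 := Real.exp_pos _
    have : p t ^ 2 = p 0 ^ 2 / Real.exp (2*t) := by
      field_simp at hft ⊢; linarith [hft]
    rw [this, mul_pow, ← Real.exp_nat_mul]
    rw [div_eq_iff (ne_of_gt hept)]
    rw [mul_assoc, ← Real.exp_add]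
    norm_num
  have h1 := hnn t ht
  have h2 : 0 ≤ p 0 * Real.exp (-t) := mul_nonneg (hnn 0 (mem_Ici.mpr le_rfl)) (Real.exp_pos _).le
  calc p t = Real.sqrt (p t ^ 2) := (Real.sqrt_sq h1).symm
    _ = Real.sqrt ((p 0 * Real.exp (-t))^2) := by rw [hsq]
    _ = p 0 * Real.exp (-t) := Real.sqrt_sq h2
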